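/- arXiv:1402.3784 — 3 statements merged into one kernel-verified Lean document; each statement's English description precedes it below -/
import Mathlib

section
/- For any α ≥ 2, ∫_{ℝ²} 2α² |y|^{α-2}/(1+|y|^α)² · (1-|y|^α)/(1+|y|^α) · ln((1+|y|^α)²) dy = -4πα. -/
open Real MeasureTheory

section Aux
open Filter Set

noncomputable def Gaux (α : ℝ) (u : ℝ) : ℝ :=
  4 * α * (Real.log u * (u⁻¹ - (u ^ 2)⁻¹) + u⁻¹ - (u ^ 2)⁻¹ / 2)

lemma Gaux_hasDerivAt (α : ℝ) (u : ℝ) (hu : 0 < u) :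
    HasDerivAt (Gaux α) (4 * α * (Real.log u * (2 - u) / u ^ 3)) u := by
  have hu' : u ≠ 0 := hu.ne'
  have h1 : HasDerivAt Real.log u⁻¹ u := Real.hasDerivAt_log hu'
  have h2 : HasDerivAt (fun u : ℝ => u⁻¹) (-(1:ℝ) / u ^ 2) u := (hasDerivAt_id u).inv hu'
  have h3 : HasDerivAt (fun u : ℝ => (u ^ 2)⁻¹) (-(2 * u ^ 1 * 1) / (u ^ 2) ^ 2) u :=
    ((hasDerivAt_id u).pow 2).inv (pow_ne_zero 2 hu')
  have := (((h1.mul (h2.sub h3)).add h2).sub (h3.div_const 2)).const_mul (4 * α)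
  refine this.congr_deriv ?_
  simp only [Pi.sub_apply]
  field_simp
  ring

lemma Gaux_tendsto (α : ℝ) : Tendsto (Gaux α) atTop (nhds 0) := by
  have hlog : Tendsto (fun u : ℝ => Real.log u / u) atTop (nhds 0) :=
    Real.isLittleO_log_id_atTop.tendsto_div_nhds_zero
  have hinv : Tendsto (fun u : ℝ => u⁻¹) atTop (nhds 0) := tendsto_inv_atTop_zero
  have h1 : Tendsto (fun u : ℝ => Real.log u * (u⁻¹ - (u ^ 2)⁻¹) + u⁻¹ - (u ^ 2)⁻¹ / 2)
      atTop (nhds 0) := by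
    have e1 : Tendsto (fun u : ℝ => Real.log u * u⁻¹) atTop (nhds 0) := by
      simpa [div_eq_mul_inv] using hlog
    have e2 : Tendsto (fun u : ℝ => Real.log u * (u ^ 2)⁻¹) atTop (nhds 0) := by
      have := e1.mul hinv
      rw [mul_zero] at this
      refine this.congr' ?_
      filter_upwards [eventually_ne_atTop (0:ℝ)] with u hu
      rw [pow_two, mul_inv, ← mul_assoc]
    have e3 : Tendsto (fun u : ℝ => (u ^ 2)⁻¹) atTop (nhds 0) := by
      have := hinv.mul hinv
      rw [mul_zero] at this
      simpa [pow_two, mul_inv] using this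
    have := ((e1.sub e2).add hinv).sub (e3.div_const 2)
    simpa [mul_sub] using this
  have := h1.const_mul (4 * α)
  unfold Gaux
  simpa using this

lemma Gaux_one (α : ℝ) : Gaux α 1 = 2 * α := by simp [Gaux]; ring_nf

lemma Gaux_two (α : ℝ) : Gaux α 2 = α * Real.log 2 + 3 * α / 2 := by
  simp only [Gaux]
  norm_num
  ring

noncomputable def phiAux (α : ℝ) (r : ℝ) : ℝ :=
  4 * α ^ 2 * (r ^ (α - 1) * ((1 - r ^ α) * Real.log (1 + r ^ α))) / (1 + r ^ α) ^ 3

lemma phiAux_hasDerivAt (α : ℝ) (hα : 2 ≤ α) {r : ℝ} (hr : 0 ≤ r) :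
    HasDerivAt (fun r : ℝ => Gaux α (1 + r ^ α)) (phiAux α r) r := by
  have hα1 : (1:ℝ) ≤ α := by linarith
  have ht : HasDerivAt (fun r : ℝ => 1 + r ^ α) (α * r ^ (α - 1)) r :=
    (Real.hasDerivAt_rpow_const (Or.inr hα1)).const_add 1
  have hs : 0 < 1 + r ^ α := by
    have := Real.rpow_nonneg hr α
    linarith
  have hG := Gaux_hasDerivAt α (1 + r ^ α) hs
  have := hG.comp r ht
  refine this.congr_deriv ?_
  have hsne : (1 : ℝ) + r ^ α ≠ 0 := hs.ne'
  unfold phiAux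
  field_simp
  ring

lemma phiAux_integral (α : ℝ) (hα : 2 ≤ α) :
    ∫ r in Ioi (0:ℝ), phiAux α r = -(2 * α) := by
  have hα0 : 0 < α := by linarith
  set H : ℝ → ℝ := fun r => Gaux α (1 + r ^ α) with hHdef
  have hH : ∀ r ∈ Ici (0:ℝ), HasDerivAt H (phiAux α r) r := fun r hr =>
    phiAux_hasDerivAt α hα hr
  -- continuity on Ici 0
  have c2 : Continuous fun r : ℝ => r ^ α :=
    continuous_iff_continuousAt.mpr fun r =>
      Real.continuousAt_rpow_const _ _ (Or.inr hα0.le)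
  have c1 : Continuous fun r : ℝ => r ^ (α - 1) :=
    continuous_iff_continuousAt.mpr fun r =>
      Real.continuousAt_rpow_const _ _ (Or.inr (by linarith))
  have hspos : ∀ r ∈ Ici (0:ℝ), 0 < 1 + r ^ α := by
    intro r hr
    have := Real.rpow_nonneg hr α
    linarith
  have φcont : ContinuousOn (phiAux α) (Ici 0) := by
    apply ContinuousOn.div
    · exact (continuous_const.continuousOn.mul (c1.continuousOn.mul
        (((continuous_const.sub c2).continuousOn).mul
          (ContinuousOn.log ((continuous_const.add c2).continuousOn)
            fun r hr => (hspos r hr).ne'))))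
    · exact ((continuous_const.add c2).pow 3).continuousOn
    · intro r hr
      exact pow_ne_zero 3 (hspos r hr).ne'
  have int1 : IntegrableOn (phiAux α) (Ioc 0 1) :=
    ((φcont.mono (Icc_subset_Ici_self)).integrableOn_Icc).mono_set Ioc_subset_Icc_self
  -- nonpositivity on Ioi 1
  have nonpos : ∀ x ∈ Ioi (1:ℝ), phiAux α x ≤ 0 := by
    intro x hx
    have hx1 : (1:ℝ) ≤ x := le_of_lt hx
    have hx0 : (0:ℝ) ≤ x := by linarith
    have htx : (1:ℝ) ≤ x ^ α := Real.one_le_rpow hx1 hα0.le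
    have hL : 0 ≤ Real.log (1 + x ^ α) := Real.log_nonneg (by linarith)
    have hA : 0 ≤ x ^ (α - 1) := Real.rpow_nonneg hx0 _
    have hden : 0 ≤ (1 + x ^ α) ^ 3 := by positivity
    apply div_nonpos_of_nonpos_of_nonneg _ hden
    apply mul_nonpos_of_nonneg_of_nonpos (by positivity)
    exact mul_nonpos_of_nonneg_of_nonpos hA
      (mul_nonpos_of_nonpos_of_nonneg (by linarith) hL)
  have hcont1 : ContinuousWithinAt H (Ici 1) 1 :=
    (hH 1 (by norm_num)).continuousAt.continuousWithinAt
  have hderiv1 : ∀ x ∈ Ioi (1:ℝ), HasDerivAt H (phiAux α x) x := fun x hx =>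
    hH x (by simp only [mem_Ici]; linarith [mem_Ioi.mp hx])
  have htend : Tendsto H atTop (nhds 0) := by
    have hs : Tendsto (fun r : ℝ => 1 + r ^ α) atTop atTop :=
      tendsto_atTop_add_const_left atTop 1 (tendsto_rpow_atTop hα0)
    exact (Gaux_tendsto α).comp hs
  have int2 : IntegrableOn (phiAux α) (Ioi 1) :=
    integrableOn_Ioi_deriv_of_nonpos hcont1 hderiv1 nonpos htend
  have I2 : ∫ r in Ioi (1:ℝ), phiAux α r = 0 - H 1 :=
    integral_Ioi_of_hasDerivAt_of_nonpos hcont1 hderiv1 nonpos htend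
  have I1 : ∫ r in (0:ℝ)..1, phiAux α r = H 1 - H 0 := by
    apply intervalIntegral.integral_eq_sub_of_hasDerivAt
    · intro x hx
      rw [uIcc_of_le zero_le_one] at hx
      exact hH x hx.1
    · apply ContinuousOn.intervalIntegrable
      rw [uIcc_of_le zero_le_one]
      exact φcont.mono Icc_subset_Ici_self
  have split : ∫ r in Ioi (0:ℝ), phiAux α r =
      (∫ r in Ioc (0:ℝ) 1, phiAux α r) + ∫ r in Ioi (1:ℝ), phiAux α r := by
    rw [← Ioc_union_Ioi_eq_Ioi (zero_le_one' ℝ),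
      setIntegral_union (Ioc_disjoint_Ioi le_rfl) measurableSet_Ioi int1 int2]
  have hIoc : ∫ r in Ioc (0:ℝ) 1, phiAux α r = H 1 - H 0 := by
    rw [← intervalIntegral.integral_of_le zero_le_one]; exact I1
  have hH0 : H 0 = 2 * α := by
    simp only [hHdef, Real.zero_rpow hα0.ne', add_zero, Gaux_one]
  have hH1 : H 1 = α * Real.log 2 + 3 * α / 2 := by
    simp only [hHdef, Real.one_rpow]
    norm_num [Gaux_two]
  rw [split, hIoc, I2, hH0, hH1]
  ring

end Aux

open Filter Set in
theorem stmt_3 (α : ℝ) (hα : 2 ≤ α) :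
    (∫ y : EuclideanSpace ℝ (Fin 2),
        2 * α ^ 2 * ‖y‖ ^ (α - 2) / (1 + ‖y‖ ^ α) ^ 2 *
          ((1 - ‖y‖ ^ α) / (1 + ‖y‖ ^ α)) * Real.log ((1 + ‖y‖ ^ α) ^ 2)) =
      -(4 * Real.pi * α) := by
  have hα0 : 0 < α := by linarith
  have key := integral_fun_norm_addHaar (volume : Measure (EuclideanSpace ℝ (Fin 2)))
    (fun r : ℝ => 2 * α ^ 2 * r ^ (α - 2) / (1 + r ^ α) ^ 2 *
      ((1 - r ^ α) / (1 + r ^ α)) * Real.log ((1 + r ^ α) ^ 2))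
  rw [key]
  have hdim : Module.finrank ℝ (EuclideanSpace ℝ (Fin 2)) = 2 := finrank_euclideanSpace_fin
  rw [hdim]
  have hvol : (volume (Metric.ball (0 : EuclideanSpace ℝ (Fin 2)) 1)).toReal = π := by
    rw [EuclideanSpace.volume_ball]
    simp only [Fintype.card_fin, ENNReal.ofReal_one, one_pow, one_mul]
    rw [show ((2:ℕ):ℝ)/2 + 1 = 2 by norm_num, Real.Gamma_two, Real.sq_sqrt Real.pi_nonneg]
    simp [Real.pi_nonneg]
  rw [measureReal_def, hvol]
  have hI : (∫ y in Ioi (0:ℝ), y ^ (2 - 1) •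
      (2 * α ^ 2 * y ^ (α - 2) / (1 + y ^ α) ^ 2 *
        ((1 - y ^ α) / (1 + y ^ α)) * Real.log ((1 + y ^ α) ^ 2))) = -(2 * α) := by
    rw [← phiAux_integral α hα]
    apply setIntegral_congr_fun measurableSet_Ioi
    intro r hr
    have hr0 : 0 < r := mem_Ioi.mp hr
    have hs : 0 < 1 + r ^ α := by
      have := Real.rpow_nonneg hr0.le α
      linarith
    have hrr : r ^ (α - 1) = r * r ^ (α - 2) := by
      rw [show α - 1 = 1 + (α - 2) by ring, Real.rpow_add hr0, Real.rpow_one]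
    have hlog : Real.log ((1 + r ^ α) ^ 2) = 2 * Real.log (1 + r ^ α) := by
      rw [Real.log_pow]; norm_num
    simp only [pow_one, smul_eq_mul, phiAux, hlog]
    rw [hrr]
    field_simp
    ring
  rw [hI]
  simp only [smul_eq_mul, Nat.cast_ofNat]
  ring
end

section
/- For any α ≥ 2, ∫_{ℝ²} 2α² |y|^{α-2}/(1+|y|^α)² · (1-|y|^α)/(1+|y|^α) · ln|y| dy = -4π. -/
open Real MeasureTheory

open Set Filter Topology Metric

noncomputable def myG (u : ℝ) : ℝ := 2 * (u * Real.log u / (1+u)^2 + 1/(1+u))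
noncomputable def myg (u : ℝ) : ℝ := 2 * ((1-u) * Real.log u / (1+u)^3)

lemma myG_deriv {u : ℝ} (hu : 0 < u) : HasDerivAt myG (myg u) u := by
  have h1 : (0:ℝ) < 1 + u := by linarith
  have hA : HasDerivAt (fun u : ℝ => u * Real.log u) (Real.log u + 1) u := by
    have := (hasDerivAt_id u).mul (Real.hasDerivAt_log hu.ne')
    refine this.congr_deriv ?_
    simp [hu.ne']
  have hB : HasDerivAt (fun u : ℝ => (1+u)^2) (2*(1+u)) u := by
    have := ((hasDerivAt_id u).const_add 1).pow 2
    simp at this; exact this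
  have hC := hA.div hB (by positivity)
  have hD : HasDerivAt (fun u : ℝ => 1/(1+u)) (-1/(1+u)^2) u := by
    have := ((hasDerivAt_id u).const_add 1).div (hasDerivAt_const u 1) one_ne_zero
    -- simpler: use inv
    have h2 := (((hasDerivAt_id u).const_add 1)).inv h1.ne'
    simp [one_div] at h2 ⊢; exact h2
  have := (hC.add hD).const_mul 2
  refine this.congr_deriv ?_
  unfold myg
  have h3 : ((1:ℝ)+u)^2 ≠ 0 := by positivity
  field_simp
  ring

lemma myg_nonpos {u : ℝ} (hu : 0 < u) : myg u ≤ 0 := by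
  unfold myg
  have h1 : (0:ℝ) < (1+u)^3 := by positivity
  have h2 : (1-u) * Real.log u ≤ 0 := by
    rcases le_or_gt u 1 with h | h
    · exact mul_nonpos_iff.mpr (Or.inl ⟨by linarith, Real.log_nonpos hu.le h⟩)
    · exact mul_nonpos_iff.mpr (Or.inr ⟨by linarith, Real.log_nonneg h.le⟩)
  have := div_nonpos_of_nonpos_of_nonneg h2 h1.le
  linarith

lemma myG_cont0 : ContinuousWithinAt myG (Ici (0:ℝ)) 0 := by
  rw [show Ici (0:ℝ) = insert 0 (Ioi 0) by rw [Ioi_insert], continuousWithinAt_insert_self]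
  have hG0 : myG 0 = 2 := by simp [myG]
  unfold ContinuousWithinAt
  rw [hG0]
  have h1 : Tendsto (fun u : ℝ => u * Real.log u) (𝓝[>] 0) (𝓝 0) := by
    have := tendsto_log_mul_rpow_nhdsGT_zero (r := 1) one_pos
    refine this.congr (fun x => ?_)
    rw [Real.rpow_one, mul_comm]
  have h2 : Tendsto (fun u : ℝ => ((1:ℝ)+u)^2) (𝓝[>] 0) (𝓝 1) := by
    have hc : Continuous fun u : ℝ => ((1:ℝ)+u)^2 := by continuity
    have := (hc.tendsto (0:ℝ)).mono_left (nhdsWithin_le_nhds (s := Ioi (0:ℝ)))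
    simpa using this
  have hden : Tendsto (fun u : ℝ => (1:ℝ)+u) (𝓝[>] 0) (𝓝 1) := by
    have hc : Continuous fun u : ℝ => (1:ℝ)+u := by continuity
    have := (hc.tendsto (0:ℝ)).mono_left (nhdsWithin_le_nhds (s := Ioi (0:ℝ)))
    simpa using this
  have h3 := (tendsto_const_nhds : Tendsto (fun _ : ℝ => (1:ℝ)) (𝓝[>] (0:ℝ)) (𝓝 1)).div
    hden one_ne_zero
  have final := ((h1.div h2 one_ne_zero).add h3).const_mul 2
  show Tendsto (fun u : ℝ => 2*(u * Real.log u / (1+u)^2 + 1/(1+u))) (𝓝[>] 0) (𝓝 2)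
  convert final using 2
  all_goals norm_num

lemma myG_top : Tendsto myG atTop (𝓝 0) := by
  have he : Tendsto (fun u : ℝ => ((1:ℝ)+u)⁻¹) atTop (𝓝 0) :=
    tendsto_inv_atTop_zero.comp (tendsto_atTop_add_const_left atTop 1 tendsto_id)
  have hc : Tendsto (fun u : ℝ => u/(1+u)) atTop (𝓝 1) := by
    have hd : Tendsto (fun u : ℝ => 1 - ((1:ℝ)+u)⁻¹) atTop (𝓝 1) := by
      have := (tendsto_const_nhds : Tendsto (fun _ : ℝ => (1:ℝ)) atTop (𝓝 1)).sub he
      simpa using this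
    apply hd.congr'
    filter_upwards [eventually_gt_atTop (0:ℝ)] with u hu
    have hne : (1:ℝ)+u ≠ 0 := by positivity
    field_simp
    ring
  have ha : Tendsto (fun u : ℝ => Real.log u / u) atTop (𝓝 0) := by
    have := Real.isLittleO_log_id_atTop.tendsto_div_nhds_zero
    simpa using this
  have hb : Tendsto (fun u : ℝ => (u/(1+u))^2) atTop (𝓝 1) := by
    have := hc.pow 2
    simpa using this
  have h1 : Tendsto (fun u : ℝ => u * Real.log u / (1+u)^2) atTop (𝓝 0) := by
    have hm := ha.mul hb
    rw [zero_mul] at hm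
    apply hm.congr'
    filter_upwards [eventually_gt_atTop (0:ℝ)] with u hu
    have hne : (1:ℝ)+u ≠ 0 := by positivity
    field_simp
  have h3 : Tendsto (fun u : ℝ => (1:ℝ)/(1+u)) atTop (𝓝 0) := by
    simpa [one_div] using he
  have final := (h1.add h3).const_mul 2
  show Tendsto (fun u : ℝ => 2*(u * Real.log u / (1+u)^2 + 1/(1+u))) atTop (𝓝 0)
  convert final using 2
  norm_num

lemma myg_integral : ∫ u in Ioi (0:ℝ), myg u = -2 := by
  have := integral_Ioi_of_hasDerivAt_of_nonpos myG_cont0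
    (fun x hx => myG_deriv (mem_Ioi.mp hx)) (fun x hx => myg_nonpos (mem_Ioi.mp hx)) myG_top
  rw [this]
  norm_num [myG]

theorem stmt_4 (α : ℝ) (hα : 2 ≤ α) :
    (∫ y : EuclideanSpace ℝ (Fin 2),
        2 * α ^ 2 * ‖y‖ ^ (α - 2) / (1 + ‖y‖ ^ α) ^ 2 *
          ((1 - ‖y‖ ^ α) / (1 + ‖y‖ ^ α)) * Real.log ‖y‖) = -(4 * Real.pi) := by
  have hα0 : (0:ℝ) < α := by linarith
  set f : ℝ → ℝ := fun r =>
    2 * α ^ 2 * r ^ (α - 2) / (1 + r ^ α) ^ 2 * ((1 - r ^ α) / (1 + r ^ α)) * Real.log r with hf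
  have key := integral_fun_norm_addHaar (volume : Measure (EuclideanSpace ℝ (Fin 2))) f
  have hdim : Module.finrank ℝ (EuclideanSpace ℝ (Fin 2)) = 2 := finrank_euclideanSpace_fin
  rw [hdim] at key
  have hball : volume.real (Metric.ball (0:EuclideanSpace ℝ (Fin 2)) 1) = π := by
    rw [measureReal_def, EuclideanSpace.volume_ball]
    rw [show ((Fintype.card (Fin 2) : ℝ)/2 + 1 : ℝ) = 2 by simp; norm_num]
    rw [Real.Gamma_two]
    simp [Real.sq_sqrt Real.pi_nonneg, Real.pi_nonneg]
  rw [hball] at key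
  have step1 : (∫ r in Ioi (0:ℝ), r ^ (2-1:ℕ) • f r)
      = ∫ r in Ioi (0:ℝ), (|α| * r ^ (α - 1)) • myg (r ^ α) := by
    refine setIntegral_congr_fun measurableSet_Ioi (fun r hr => ?_)
    have hr0 : (0:ℝ) < r := mem_Ioi.mp hr
    have hrpow : (0:ℝ) < r ^ α := Real.rpow_pos_of_pos hr0 α
    have hne : (1:ℝ) + r ^ α ≠ 0 := by positivity
    simp only [hf, myg, smul_eq_mul, pow_one, abs_of_pos hα0]
    rw [Real.log_rpow hr0,
      show α - 1 = (α - 2) + 1 by ring, Real.rpow_add hr0, Real.rpow_one]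
    field_simp
    ring
  rw [step1, integral_comp_rpow_Ioi myg (ne_of_gt hα0), myg_integral] at key
  rw [key]
  simp [smul_eq_mul]
  ring
end

section
/- For any α ≥ 2 and δ > 0, the function Z(x) = (δ^α - |x|^α)/(δ^α + |x|^α) satisfies -ΔZ = 2α² δ^α |x|^{α-2}/(δ^α + |x|^α)² · Z on ℝ² \ {0}. -/
open Real MeasureTheory

/-- The Laplacian of a function on `ℝ²`, as the sum of the second partial
derivatives along the standard basis directions. -/
noncomputable def laplacian (f : EuclideanSpace ℝ (Fin 2) → ℝ)
    (x : EuclideanSpace ℝ (Fin 2)) : ℝ :=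
  ∑ i : Fin 2,
    fderiv ℝ (fun y => fderiv ℝ f y (EuclideanSpace.single i 1)) x (EuclideanSpace.single i 1)

local notation "E2" => EuclideanSpace ℝ (Fin 2)

noncomputable def gg (A β t : ℝ) : ℝ := (A - t ^ β) / (A + t ^ β)
noncomputable def dgg (A β t : ℝ) : ℝ := -(2 * A * β) * t ^ (β - 1) / (A + t ^ β) ^ 2
noncomputable def ddgg (A β t : ℝ) : ℝ :=
  -(2 * A * β) * ((β - 1) * (A + t ^ β) - 2 * β * t ^ β) * t ^ (β - 2) / (A + t ^ β) ^ 3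

lemma hden {A β t : ℝ} (hA : 0 < A) (ht : 0 < t) : 0 < A + t ^ β :=
  add_pos hA (rpow_pos_of_pos ht β)

lemma hasDerivAt_gg {A β t : ℝ} (hA : 0 < A) (ht : 0 < t) :
    HasDerivAt (gg A β) (dgg A β t) t := by
  have hp : HasDerivAt (fun t : ℝ => t ^ β) (β * t ^ (β - 1)) t :=
    Real.hasDerivAt_rpow_const (Or.inl ht.ne')
  have hd := hden (β := β) hA ht
  have h := ((hp.const_sub A).div (hp.const_add A) hd.ne')
  refine h.congr_deriv ?_
  unfold dgg
  rw [div_eq_div_iff (by positivity) (by positivity)]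
  ring

lemma hasDerivAt_dgg {A β t : ℝ} (hA : 0 < A) (ht : 0 < t) :
    HasDerivAt (dgg A β) (ddgg A β t) t := by
  have hp : HasDerivAt (fun t : ℝ => t ^ β) (β * t ^ (β - 1)) t :=
    Real.hasDerivAt_rpow_const (Or.inl ht.ne')
  have hp1 : HasDerivAt (fun t : ℝ => t ^ (β - 1)) ((β - 1) * t ^ (β - 1 - 1)) t :=
    Real.hasDerivAt_rpow_const (Or.inl ht.ne')
  have hd := hden (β := β) hA ht
  have hnum : HasDerivAt (fun t : ℝ => -(2 * A * β) * t ^ (β - 1))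
      (-(2 * A * β) * ((β - 1) * t ^ (β - 1 - 1))) t := hp1.const_mul _
  have hdenom : HasDerivAt (fun t : ℝ => (A + t ^ β) ^ 2)
      (2 * (A + t ^ β) ^ 1 * (β * t ^ (β - 1))) t := (hp.const_add A).pow 2
  have h := hnum.div hdenom (by positivity)
  refine h.congr_deriv ?_
  have e1 : t ^ (β - 1) = t ^ (β - 2) * t := by
    rw [← Real.rpow_add_one ht.ne']; ring_nf
  have e2 : t ^ β = t ^ (β - 2) * t * t := by
    rw [← e1, ← Real.rpow_add_one ht.ne']; ring_nf
  have e3 : t ^ (β - 1 - 1) = t ^ (β - 2) := by ring_nf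
  unfold ddgg
  rw [div_eq_div_iff (by positivity) (by positivity), e3, e1, e2]
  ring

noncomputable def sfun (y : E2) : ℝ := y 0 * y 0 + y 1 * y 1

noncomputable def Lsf (y : E2) : E2 →L[ℝ] ℝ :=
  ((y 0 • (EuclideanSpace.proj 0 : E2 →L[ℝ] ℝ) + y 0 • EuclideanSpace.proj 0) +
   (y 1 • (EuclideanSpace.proj 1 : E2 →L[ℝ] ℝ) + y 1 • EuclideanSpace.proj 1))

lemma hasFDerivAt_sfun (y : E2) : HasFDerivAt sfun (Lsf y) y := by
  have h0 : HasFDerivAt (fun z : E2 => z 0) (EuclideanSpace.proj 0 : E2 →L[ℝ] ℝ) y :=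
    (EuclideanSpace.proj (0 : Fin 2) : E2 →L[ℝ] ℝ).hasFDerivAt
  have h1 : HasFDerivAt (fun z : E2 => z 1) (EuclideanSpace.proj 1 : E2 →L[ℝ] ℝ) y :=
    (EuclideanSpace.proj (1 : Fin 2) : E2 →L[ℝ] ℝ).hasFDerivAt
  exact (h0.mul h0).add (h1.mul h1)

lemma Lsf_single (y : E2) (i : Fin 2) : Lsf y (EuclideanSpace.single i 1) = 2 * y i := by
  fin_cases i <;> simp [Lsf, EuclideanSpace.single_apply] <;> ring

lemma sfun_eq_norm (y : E2) : sfun y = ‖y‖ ^ (2 : ℕ) := by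
  rw [EuclideanSpace.norm_eq, Real.sq_sqrt (by positivity)]
  simp [sfun, Fin.sum_univ_two, Real.norm_eq_abs, sq_abs, sq]

lemma sfun_rpow (y : E2) (c : ℝ) : (sfun y) ^ c = ‖y‖ ^ (2 * c) := by
  rw [sfun_eq_norm, ← Real.rpow_natCast ‖y‖ 2, ← Real.rpow_mul (norm_nonneg y)]
  norm_num


theorem stmt_5 (α δ : ℝ) (hα : 2 ≤ α) (hδ : 0 < δ) :
    ∀ x : EuclideanSpace ℝ (Fin 2), x ≠ 0 →
      -laplacian (fun y => (δ ^ α - ‖y‖ ^ α) / (δ ^ α + ‖y‖ ^ α)) x =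
        2 * α ^ 2 * δ ^ α * ‖x‖ ^ (α - 2) / (δ ^ α + ‖x‖ ^ α) ^ 2 *
          ((δ ^ α - ‖x‖ ^ α) / (δ ^ α + ‖x‖ ^ α)) := by
  intro x hx
  set A : ℝ := δ ^ α with hAdef
  set β : ℝ := α / 2 with hβdef
  have hA : 0 < A := rpow_pos_of_pos hδ α
  have hxnorm : 0 < ‖x‖ := norm_pos_iff.mpr hx
  -- the function is gg A β ∘ sfun
  have hfeq : (fun y : E2 => (δ ^ α - ‖y‖ ^ α) / (δ ^ α + ‖y‖ ^ α))
      = fun y => gg A β (sfun y) := by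
    funext y
    unfold gg
    rw [sfun_rpow y β, hβdef, show 2 * (α / 2) = α by ring]
  have hspos : ∀ y : E2, y ≠ 0 → 0 < sfun y := by
    intro y hy
    rw [sfun_eq_norm]
    have : 0 < ‖y‖ := norm_pos_iff.mpr hy
    positivity
  -- fderiv of the composite away from 0
  have hF : ∀ y : E2, y ≠ 0 →
      HasFDerivAt (fun z => gg A β (sfun z)) (dgg A β (sfun y) • Lsf y) y := by
    intro y hy
    exact (hasDerivAt_gg hA (hspos y hy)).comp_hasFDerivAt y (hasFDerivAt_sfun y)
  -- second derivative pieces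
  have hsx := hspos x hx
  have hinner : ∀ i : Fin 2,
      fderiv ℝ (fun y => fderiv ℝ (fun z => gg A β (sfun z)) y (EuclideanSpace.single i 1))
        x (EuclideanSpace.single i 1)
      = dgg A β (sfun x) * 2 + 2 * x i * (ddgg A β (sfun x) * (2 * x i)) := by
    intro i
    have hev : (fun y => dgg A β (sfun y) * (2 * y i)) =ᶠ[nhds x]
        (fun y => fderiv ℝ (fun z => gg A β (sfun z)) y (EuclideanSpace.single i 1)) := by
      filter_upwards [compl_singleton_mem_nhds hx] with y hy
      rw [(hF y hy).fderiv]
      simp [Lsf_single]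
    have h1 : HasFDerivAt (fun y : E2 => dgg A β (sfun y)) (ddgg A β (sfun x) • Lsf x) x :=
      (hasDerivAt_dgg hA hsx).comp_hasFDerivAt x (hasFDerivAt_sfun x)
    have h2 : HasFDerivAt (fun y : E2 => 2 * y i)
        ((2 : ℝ) • (EuclideanSpace.proj i : E2 →L[ℝ] ℝ)) x :=
      (EuclideanSpace.proj i : E2 →L[ℝ] ℝ).hasFDerivAt.const_mul 2
    have hmul : HasFDerivAt (fun y : E2 => dgg A β (sfun y) * (2 * y i)) _ x := h1.mul h2
    rw [← hev.fderiv_eq, hmul.fderiv]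
    simp [Lsf_single, EuclideanSpace.single_apply]
  rw [hfeq]
  unfold laplacian
  rw [Fin.sum_univ_two, hinner 0, hinner 1]
  -- now pure algebra
  have hx0 : 2 * x 0 * (ddgg A β (sfun x) * (2 * x 0)) + 2 * x 1 * (ddgg A β (sfun x) * (2 * x 1))
      = 4 * ddgg A β (sfun x) * sfun x := by unfold sfun; ring
  have key : -(dgg A β (sfun x) * 2 + 2 * x 0 * (ddgg A β (sfun x) * (2 * x 0))
      + (dgg A β (sfun x) * 2 + 2 * x 1 * (ddgg A β (sfun x) * (2 * x 1))))
      = -(4 * dgg A β (sfun x) + 4 * ddgg A β (sfun x) * sfun x) := by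
    unfold sfun; ring
  rw [key]
  -- rewrite rpow relations
  set S : ℝ := sfun x with hSdef
  have hP : S ^ (β - 1) = ‖x‖ ^ (α - 2) := by
    rw [hSdef, sfun_rpow x (β - 1), hβdef]; ring_nf
  have hQ : S ^ β = ‖x‖ ^ α := by
    rw [hSdef, sfun_rpow x β, hβdef, show 2 * (α / 2) = α by ring]
  have hR : S ^ (β - 2) = ‖x‖ ^ (α - 2) / S := by
    rw [eq_div_iff hsx.ne', ← hP, ← Real.rpow_add_one hsx.ne']
    ring_nf
  have hdenpos : 0 < A + ‖x‖ ^ α := add_pos hA (rpow_pos_of_pos hxnorm α)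
  unfold dgg ddgg
  rw [hP, hQ, hR, hβdef]
  field_simp
  ring
end
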